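/- Assume V⁺ admits a monomial parametrization with exponent matrix A (data p, A, K, ψ) and that the cone generator matrix E has no zero row. Let k ∈ K and a, b ∈ ℝ_{>0}^n with a ≠ b, (k,a) ∈ V⁺, (k,b) ∈ V⁺ and b − a ∈ im(S). Set z = b − a and μ = ln(b) − ln(a) (logarithm componentwise). Then: (i) z ∈ im(S), μ ∈ rs(A) and sign(z) = sign(μ); and (ii) a_i = z_i/(e^{μ_i} − 1) for every i with z_i ≠ 0, b = a⋆e^μ, and there exists λ ∈ Λ(E) with k_j = (Eλ)_j/φ(a)_j for all j = 1,…,r. -/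

import Mathlib

open Matrix

noncomputable section

/-- The monomial map φ: `phi Y x j = ∏ i, x i ^ Y i j`. -/
def phi {n r : ℕ} (Y : Matrix (Fin n) (Fin r) ℕ) (x : Fin n → ℝ) : Fin r → ℝ :=
  fun j => ∏ i, x i ^ Y i j

/-- The positive steady state variety V⁺. -/
def Vplus {n r : ℕ} (Y : Matrix (Fin n) (Fin r) ℕ) (S : Matrix (Fin n) (Fin r) ℝ) :
    Set ((Fin r → ℝ) × (Fin n → ℝ)) :=
  {p | (∀ j, 0 < p.1 j) ∧ (∀ i, 0 < p.2 i) ∧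
    S.mulVec (fun j => p.1 j * phi Y p.2 j) = 0}

/-- `E` is a cone generator matrix for `S`:
`E` is nonnegative and `ker S ∩ ℝ_{≥0}^r = {Eλ : λ ≥ 0}`. -/
def IsConeGenMatrix {n r d : ℕ} (S : Matrix (Fin n) (Fin r) ℝ)
    (E : Matrix (Fin r) (Fin d) ℝ) : Prop :=
  (∀ j l, 0 ≤ E j l) ∧
  {v : Fin r → ℝ | S.mulVec v = 0 ∧ ∀ j, 0 ≤ v j} =
    {v : Fin r → ℝ | ∃ lam : Fin d → ℝ, (∀ l, 0 ≤ lam l) ∧ v = E.mulVec lam}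

/-- The coefficient cone Λ(E). -/
def Lambda {r d : ℕ} (E : Matrix (Fin r) (Fin d) ℝ) : Set (Fin d → ℝ) :=
  {lam | (∀ l, 0 ≤ lam l) ∧ ∀ j, 0 < E.mulVec lam j}

/-- `ξ^B`: for a rational `q × m` matrix `B`, `(ξ^B) j = ∏ i, ξ i ^ (B i j)` (real powers). -/
def vecPow {q m : ℕ} (ξ : Fin q → ℝ) (B : Matrix (Fin q) (Fin m) ℚ) : Fin m → ℝ :=
  fun j => ∏ i, ξ i ^ ((B i j : ℝ))

/-- V⁺ admits a monomial parametrization with exponent matrix `A` (data `p`, `A`, `K`, `ψ`). -/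
def IsMonomialParamExp {n r : ℕ} (Y : Matrix (Fin n) (Fin r) ℕ)
    (S : Matrix (Fin n) (Fin r) ℝ) (p : ℕ) (A : Matrix (Fin (n - p)) (Fin n) ℚ)
    (K : Set (Fin r → ℝ)) (ψ : (Fin r → ℝ) → (Fin n → ℝ)) : Prop :=
  p < n ∧ A.rank = n - p ∧ (∀ k ∈ K, ∀ j, 0 < k j) ∧ (∀ k ∈ K, ∀ i, 0 < ψ k i) ∧
  ∀ k x, (∀ j : Fin r, 0 < k j) → (∀ i : Fin n, 0 < x i) →
    ((k, x) ∈ Vplus Y S ↔ k ∈ K ∧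
      ∃ ξ : Fin (n - p) → ℝ, (∀ l, 0 < ξ l) ∧ x = fun i => ψ k i * vecPow ξ A i)

/-- `Z` is a conservation matrix for `S` (with `s = rank S`):
its rows form a basis of the left kernel of `S`. -/
def IsConservationMatrix {n r : ℕ} (S : Matrix (Fin n) (Fin r) ℝ) (s : ℕ)
    (Z : Matrix (Fin (n - s)) (Fin n) ℝ) : Prop :=
  S.rank = s ∧ s < n ∧ LinearIndependent ℝ (fun i => Z i) ∧
    Submodule.span ℝ (Set.range (fun i => Z i)) = LinearMap.ker S.vecMulLinear

/-- `im₊(Z) = {Zx : x ≥ 0}`. -/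
def imPos {m n : ℕ} (Z : Matrix (Fin m) (Fin n) ℝ) : Set (Fin m → ℝ) :=
  {c | ∃ x : Fin n → ℝ, (∀ i, 0 ≤ x i) ∧ c = Z.mulVec x}

/-- The real row space of a rational matrix. -/
def rowSpace {q m : ℕ} (A : Matrix (Fin q) (Fin m) ℚ) : Submodule ℝ (Fin m → ℝ) :=
  Submodule.span ℝ (Set.range (fun l => fun i => ((A l i : ℝ))))

/-- The column space (image) of `S`. -/
def colSpace {n r : ℕ} (S : Matrix (Fin n) (Fin r) ℝ) : Submodule ℝ (Fin n → ℝ) :=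
  LinearMap.range S.mulVecLin

/-- Componentwise sign of a vector. -/
def signVec {m : ℕ} (v : Fin m → ℝ) : Fin m → ℝ := fun i => Real.sign (v i)

/-- every pair of distinct positive steady states for the same k arises from
the construction of Theorem (compute_abk): z = b − a and μ = ln b − ln a satisfy the sign
condition and equations (def_a)–(def_k). -/
theorem sign_pattern_of_multistationarity {n r d s p : ℕ} (hn : 1 ≤ n) (hr : 1 ≤ r)
    (Y : Matrix (Fin n) (Fin r) ℕ) (S : Matrix (Fin n) (Fin r) ℝ)
    (A : Matrix (Fin (n - p)) (Fin n) ℚ) (K : Set (Fin r → ℝ))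
    (ψ : (Fin r → ℝ) → (Fin n → ℝ)) (hparam : IsMonomialParamExp Y S p A K ψ)
    (E : Matrix (Fin r) (Fin d) ℝ) (hE : IsConeGenMatrix S E)
    (hrow : ∀ j, ∃ l, E j l ≠ 0)
    (k : Fin r → ℝ) (hk : k ∈ K) (a b : Fin n → ℝ)
    (ha : ∀ i, 0 < a i) (hb : ∀ i, 0 < b i) (hab : a ≠ b)
    (hka : (k, a) ∈ Vplus Y S) (hkb : (k, b) ∈ Vplus Y S)
    (hba : (b - a) ∈ colSpace S)
    (z μ : Fin n → ℝ) (hz : z = b - a)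
    (hμ : μ = fun i => Real.log (b i) - Real.log (a i)) :
    (z ∈ colSpace S ∧ μ ∈ rowSpace A ∧ signVec z = signVec μ) ∧
    ((∀ i, z i ≠ 0 → a i = z i / (Real.exp (μ i) - 1)) ∧
      b = (fun i => a i * Real.exp (μ i)) ∧
      ∃ lam ∈ Lambda E, ∀ j, k j = E.mulVec lam j / phi Y a j) := by
  obtain ⟨hk0, ha0, hSa⟩ := hka
  obtain ⟨hk0', hb0, hSb⟩ := hkb
  obtain ⟨hpn, hrank, hKpos, hψpos, hiff⟩ := hparam
  obtain ⟨-, ξ, hξpos, hxa⟩ := (hiff k a hk0 ha).mp ⟨hk0, ha0, hSa⟩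
  obtain ⟨-, ξ', hξ'pos, hxb⟩ := (hiff k b hk0 hb).mp ⟨hk0', hb0, hSb⟩
  have hexp : ∀ i, Real.exp (μ i) = b i / a i := by
    intro i
    rw [hμ]
    rw [Real.exp_sub, Real.exp_log (hb i), Real.exp_log (ha i)]
  have hphi : ∀ j, 0 < phi Y a j := by
    intro j
    exact Finset.prod_pos fun i _ => pow_pos (ha i) _
  refine ⟨⟨hz ▸ hba, ?_, ?_⟩, ?_, ?_, ?_⟩
  · -- μ ∈ rowSpace A
    have hμeq : μ = ∑ l, (Real.log (ξ' l) - Real.log (ξ l)) • (fun i => ((A l i : ℝ))) := by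
      funext i
      have hbi : b i = ψ k i * vecPow ξ' A i := by rw [hxb]
      have hai : a i = ψ k i * vecPow ξ A i := by rw [hxa]
      have hψ0 : ψ k i ≠ 0 := ne_of_gt (hψpos k hk i)
      have h1 : vecPow ξ' A i ≠ 0 := by
        exact ne_of_gt (Finset.prod_pos fun l _ => Real.rpow_pos_of_pos (hξ'pos l) _)
      have h2 : vecPow ξ A i ≠ 0 := by
        exact ne_of_gt (Finset.prod_pos fun l _ => Real.rpow_pos_of_pos (hξpos l) _)
      have hlog1 : Real.log (vecPow ξ' A i) = ∑ l, ((A l i : ℝ)) * Real.log (ξ' l) := by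
        rw [vecPow, Real.log_prod (fun l _ => ne_of_gt (Real.rpow_pos_of_pos (hξ'pos l) _))]
        exact Finset.sum_congr rfl fun l _ => Real.log_rpow (hξ'pos l) _
      have hlog2 : Real.log (vecPow ξ A i) = ∑ l, ((A l i : ℝ)) * Real.log (ξ l) := by
        rw [vecPow, Real.log_prod (fun l _ => ne_of_gt (Real.rpow_pos_of_pos (hξpos l) _))]
        exact Finset.sum_congr rfl fun l _ => Real.log_rpow (hξpos l) _
      rw [hμ]
      simp only [hbi, hai, Real.log_mul hψ0 h1, Real.log_mul hψ0 h2, hlog1, hlog2,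
        Finset.sum_apply, Pi.smul_apply, smul_eq_mul]
      rw [add_sub_add_left_eq_sub, ← Finset.sum_sub_distrib]
      exact Finset.sum_congr rfl fun l _ => by ring
    rw [hμeq]
    exact Submodule.sum_mem _ fun l _ =>
      Submodule.smul_mem _ _ (Submodule.subset_span (Set.mem_range_self l))
  · -- sign equality
    funext i
    simp only [signVec, hz, hμ, Pi.sub_apply]
    rcases lt_trichotomy (a i) (b i) with h | h | h
    · rw [Real.sign_of_pos (by linarith), Real.sign_of_pos
        (by have := Real.log_lt_log (ha i) h; linarith)]
    · rw [h]; simp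
    · rw [Real.sign_of_neg (by linarith), Real.sign_of_neg
        (by have := Real.log_lt_log (hb i) h; linarith)]
  · -- def_a
    intro i hzi
    have hai : a i ≠ 0 := ne_of_gt (ha i)
    have : Real.exp (μ i) - 1 = z i / a i := by
      rw [hexp i, hz]; field_simp; rfl
    rw [this]
    rw [div_div_eq_mul_div, mul_comm, mul_div_assoc, div_self hzi, mul_one]
  · -- b = a * exp μ
    funext i
    rw [hexp i]
    field_simp [(ha i).ne']
  · -- lambda
    have hv : (fun j => k j * phi Y a j) ∈
        {v : Fin r → ℝ | S.mulVec v = 0 ∧ ∀ j, 0 ≤ v j} := by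
      exact ⟨hSa, fun j => le_of_lt (mul_pos (hk0 j) (hphi j))⟩
    rw [hE.2] at hv
    obtain ⟨lam, hlam0, hlam⟩ := hv
    refine ⟨lam, ⟨hlam0, fun j => ?_⟩, fun j => ?_⟩
    · rw [← hlam]; exact mul_pos (hk0 j) (hphi j)
    · rw [← hlam]
      field_simp [(hphi j).ne']
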